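/- Let X be a Banach space over ℝ belonging to class (B) that admits no uncountable biorthogonal system. Suppose {x_α}_{α<ω₁} is a family of nonzero elements of X indexed by the countable ordinals, and {Γ_σ}_{σ<ω₁} is a family of cofinal (unbounded) subsets of ω₁ such that Γ_β ⊆ Γ_α whenever α < β < ω₁. Then ⋂_{σ<ω₁} closure(span{x_α : α ∈ Γ_σ}) ≠ {0}, where closure is taken in the norm topology. -/

import Mathlib

open Set Cardinal Pointwise

universe u

def ClassB (X : Type u) [NormedAddCommGroup X] [NormedSpace ℝ X] : Prop :=
  ∀ κ : Cardinal.{u}, Cardinal.aleph0 < κ → κ.IsRegular →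
    ∀ Z : {σ : Ordinal // σ < κ.ord} → Submodule ℝ X,
      (∀ σ, IsClosed (Z σ : Set X)) →
      (∀ α β, α < β → Z β < Z α) →
      (⋂ σ, (Z σ : Set X)) = {0} →
      Bornology.IsBounded (⋂ σ, (Metric.closedBall (0 : X) 1 + (Z σ : Set X)))


namespace IcsAux

universe a b

/-- The canonical copy of `ω₁` in universe `a`. -/
abbrev Idx : Type (a + 1) := {σ : Ordinal.{a} // σ < (Cardinal.aleph 1).ord}

instance : WellFoundedLT Idx.{a} :=
  ⟨Subrelation.wf (fun {_ _} h => h) (InvImage.wf (Subtype.val) Ordinal.lt_wf)⟩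

lemma card_le_aleph0 (u : Idx.{a}) : u.1.card ≤ ℵ₀ := by
  have h := Cardinal.lt_ord.1 u.2
  have h2 : u.1.card < Order.succ ℵ₀ := by rwa [Cardinal.succ_aleph0]
  exact Order.lt_succ_iff.1 h2

/-- Initial segments of `ω₁` are countable. -/
instance countable_lt (u : Idx.{a}) : Countable {β : Idx.{a} // β < u} := by
  have h1 : Countable (Set.Iio u.1) := by
    rw [← Cardinal.mk_le_aleph0_iff, Ordinal.mk_Iio_ordinal, ← Cardinal.lift_aleph0.{a+1, a}]
    exact Cardinal.lift_le.2 (card_le_aleph0 u)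
  exact Function.Injective.countable (f := fun β : {β : Idx.{a} // β < u} =>
    (⟨β.1.1, β.2⟩ : Set.Iio u.1))
    (fun β γ h => by
      have h2 := congrArg Subtype.val h
      exact Subtype.ext (Subtype.ext h2))

/-- Countable families in `ω₁` are bounded. -/
lemma exists_ub {κ : Type*} [Countable κ] (f : κ → Idx.{a}) : ∃ b : Idx.{a}, ∀ i, f i ≤ b := by
  rcases isEmpty_or_nonempty κ with hk | hk
  · exact ⟨⟨0, Cardinal.lt_ord.2 (by simpa using aleph0_lt_aleph_one.trans_le' aleph0_pos.le)⟩,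
      fun i => (IsEmpty.false i).elim⟩
  · obtain ⟨e, he⟩ := exists_surjective_nat κ
    have hlt : (⨆ n : ℕ, (f (e n)).1) < (Cardinal.aleph 1).ord := by
      refine Ordinal.iSup_lt_ord_lift ?_ (fun n => (f (e n)).2)
      rw [Cardinal.isRegular_aleph_one.cof_eq, Cardinal.mk_nat]
      simpa using aleph0_lt_aleph_one
    refine ⟨⟨_, hlt⟩, fun i => ?_⟩
    obtain ⟨n, rfl⟩ := he i
    exact Subtype.coe_le_coe.1 (Ordinal.le_iSup (fun n : ℕ => (f (e n)).1) n)

/-- Successors in `ω₁`. -/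
noncomputable def succI (u : Idx.{a}) : Idx.{a} :=
  ⟨Order.succ u.1, (Cardinal.isSuccLimit_ord (Cardinal.aleph0_le_aleph 1)).succ_lt u.2⟩

lemma lt_succI (u : Idx.{a}) : u < succI u := by
  have : u.1 < Order.succ u.1 := Order.lt_succ u.1
  exact this

lemma succI_le {u v : Idx.{a}} (h : u < v) : succI u ≤ v := by
  have : Order.succ u.1 ≤ v.1 := Order.succ_le_of_lt h
  exact this

/-- Final segments of `ω₁` are uncountable. -/
lemma not_countable_gt (u : Idx.{a}) : ¬ Countable {β : Idx.{a} // u < β} := by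
  intro hc
  haveI := hc
  haveI : Countable {β : Idx.{a} // ¬ u < β} := by
    have hlt : ∀ β : {β : Idx.{a} // ¬ u < β}, β.1 < succI u := by
      intro β
      exact lt_of_le_of_lt (not_lt.1 β.2) (lt_succI u)
    haveI : Countable {β : Idx.{a} // β < succI u} := countable_lt (succI u)
    exact Function.Injective.countable (f := fun β : {β : Idx.{a} // ¬ u < β} =>
      (⟨β.1, hlt β⟩ : {β : Idx.{a} // β < succI u}))
      (fun β γ h => by
        have h2 := congrArg Subtype.val h
        exact Subtype.ext h2)
  haveI : Countable Idx.{a} := by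
    have e : Idx.{a} ≃ {β : Idx.{a} // u < β} ⊕ {β : Idx.{a} // ¬ u < β} :=
      (Equiv.sumCompl _).symm
    exact Countable.of_equiv _ e.symm
  have hmk : #(Idx.{a}) ≤ ℵ₀ := Cardinal.mk_le_aleph0
  have : #(Set.Iio (Cardinal.aleph 1 : Cardinal.{a}).ord) ≤ ℵ₀ := by
    refine le_trans (le_of_eq ?_) hmk
    rfl
  rw [Ordinal.mk_Iio_ordinal, Cardinal.card_ord, ← Cardinal.lift_aleph0.{a+1, a}] at this
  exact absurd (Cardinal.lift_le.1 this) (not_le.2 aleph0_lt_aleph_one)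


lemma aleph1_ord_lift :
    (Cardinal.aleph 1 : Cardinal.{max a b}).ord
      = Ordinal.lift.{b} (Cardinal.aleph 1 : Cardinal.{a}).ord := by
  rw [Cardinal.lift_ord, Cardinal.lift_aleph, Ordinal.lift_one]

lemma idx_descend (o : Ordinal.{max a b}) (ho : o < (Cardinal.aleph 1).ord) :
    ∃ τ : Ordinal.{a}, Ordinal.lift.{b} τ = o ∧ τ < (Cardinal.aleph 1).ord := by
  rw [aleph1_ord_lift.{a, b}] at ho
  obtain ⟨τ, hlt, hτ⟩ := Ordinal.lt_lift_iff.1 ho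
  exact ⟨τ, hτ, hlt⟩

/-- Lifting `ω₁` across universes. -/
noncomputable def idxLift : Idx.{a} ≃o Idx.{max a b} where
  toFun σ := ⟨Ordinal.lift.{b} σ.1, by
    rw [aleph1_ord_lift.{a, b}]; exact Ordinal.lift_lt.2 σ.2⟩
  invFun σ := ⟨(idx_descend.{a, b} σ.1 σ.2).choose,
    (idx_descend.{a, b} σ.1 σ.2).choose_spec.2⟩
  left_inv σ := by
    apply Subtype.ext
    have h := (idx_descend.{a, b} (Ordinal.lift.{b} σ.1)
      (by rw [aleph1_ord_lift.{a, b}]; exact Ordinal.lift_lt.2 σ.2)).choose_spec.1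
    exact Ordinal.lift_inj.1 h
  right_inv σ := by
    apply Subtype.ext
    exact (idx_descend.{a, b} σ.1 σ.2).choose_spec.1
  map_rel_iff' {σ τ} := by
    simp only [Equiv.coe_fn_mk, Subtype.mk_le_mk]
    exact ⟨fun h => Subtype.coe_le_coe.1 (Ordinal.lift_le.1 h),
      fun h => Ordinal.lift_le.2 (Subtype.coe_le_coe.2 h)⟩

/-- `ω₁` is the same in every universe. -/
noncomputable def idxIso : Idx.{a} ≃o Idx.{b} :=
  (idxLift.{a, b}).trans (idxLift.{b, a}).symm


section Analysis

open Metric Bornology TopologicalSpace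

universe uX
variable {X : Type uX} [NormedAddCommGroup X] [NormedSpace ℝ X]

/-- Hahn–Banach: a continuous functional vanishing on a closed subspace, nonzero at a point. -/
lemma hb_vanish (V : Submodule ℝ X) (hV : IsClosed (V : Set X)) {y : X} (hy : y ∉ V) :
    ∃ f : X →L[ℝ] ℝ, f y = 1 ∧ ∀ v ∈ V, f v = 0 := by
  obtain ⟨f, c, hfy, hfV⟩ := geometric_hahn_banach_point_closed V.convex hV hy
  have h0 : c < 0 := by simpa using hfV 0 V.zero_mem
  have hker : ∀ v ∈ V, f v = 0 := by
    intro v hv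
    by_contra hne
    have h2 := hfV (((c - 1) / f v) • v) (V.smul_mem _ hv)
    rw [map_smul, smul_eq_mul, div_mul_cancel₀ _ hne] at h2
    linarith
  have hy0 : f y ≠ 0 := (hfy.trans h0).ne
  refine ⟨(f y)⁻¹ • f, ?_, fun v hv => ?_⟩
  · simp [inv_mul_cancel₀ hy0]
  · simp [hker v hv]

variable (W : Idx.{a} → Submodule ℝ X)

lemma Wanti (hdec : ∀ α β : Idx.{a}, α < β → W β < W α) {α β : Idx.{a}} (h : α ≤ β) :
    W β ≤ W α :=
  h.lt_or_eq.elim (fun h' => (hdec _ _ h').le) (fun h' => h' ▸ le_rfl)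

/-- The uniform norm bound coming from class (B). -/
lemma lemK {r : ℝ} (hr : ∀ z : X, (∀ σ, z ∈ closedBall (0 : X) 1 + (W σ : Set X)) → ‖z‖ ≤ r)
    (w : X) (t : ℝ) (ht : 0 < t) (hall : ∀ τ, infDist w (W τ) < t) : ‖w‖ ≤ r * t := by
  have hmem : ∀ σ, t⁻¹ • w ∈ closedBall (0 : X) 1 + (W σ : Set X) := by
    intro σ
    obtain ⟨z, hz, hdist⟩ := (infDist_lt_iff ⟨0, (W σ).zero_mem⟩).1 (hall σ)
    refine ⟨t⁻¹ • (w - z), ?_, t⁻¹ • z, (W σ).smul_mem _ hz, by module⟩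
    rw [mem_closedBall, dist_zero_right, norm_smul, norm_inv, Real.norm_eq_abs,
      abs_of_pos ht]
    rw [inv_mul_le_iff₀ ht, mul_one]
    rw [dist_eq_norm] at hdist
    exact hdist.le
  have hn := hr _ hmem
  rw [norm_smul, norm_inv, Real.norm_eq_abs, abs_of_pos ht, inv_mul_le_iff₀ ht] at hn
  rw [mul_comm]
  exact hn

/-- No uncountable strictly decreasing chain of closed subspaces inside a separable set. -/
lemma lemD (hcl : ∀ σ, IsClosed (W σ : Set X))
    (hdec : ∀ α β : Idx.{a}, α < β → W β < W α) (c : Set X) (hc : c.Countable)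
    (u : Idx.{a}) (hsub : ∀ τ, u < τ → (W τ : Set X) ⊆ closure c) : False := by
  classical
  have hcne : c.Nonempty := by
    by_contra hne
    rw [not_nonempty_iff_eq_empty] at hne
    have h0 := hsub (succI u) (lt_succI u) (W (succI u)).zero_mem
    rw [hne, closure_empty] at h0
    exact h0
  set e : ℕ → X := Set.enumerateCountable hc hcne.choose with he
  have hce : c ⊆ Set.range e := Set.subset_range_enumerate hc hcne.choose
  have main : ∀ τ : {τ : Idx.{a} // u < τ}, ∃ (y : X) (k n : ℕ),
      y ∈ W τ.1 ∧ (1 : ℝ) / (k + 1) < infDist y (W (succI τ.1)) ∧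
        dist y (e n) < 1 / (2 * (k + 1)) := by
    intro τ
    obtain ⟨y, hyW, hyn⟩ := SetLike.exists_of_lt (hdec τ.1 (succI τ.1) (lt_succI τ.1))
    have hd : 0 < infDist y (W (succI τ.1)) :=
      ((hcl (succI τ.1)).notMem_iff_infDist_pos ⟨0, (W (succI τ.1)).zero_mem⟩).1 hyn
    obtain ⟨k, hk⟩ := exists_nat_gt (1 / infDist y (W (succI τ.1)))
    have hk1 : (1 : ℝ) / (k + 1) < infDist y (W (succI τ.1)) := by
      rw [div_lt_iff₀ (by positivity)]
      rw [div_lt_iff₀ hd] at hk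
      nlinarith
    have hyc : y ∈ closure c := hsub τ.1 τ.2 hyW
    obtain ⟨p, hpc, hpd⟩ := Metric.mem_closure_iff.1 hyc (1 / (2 * (k + 1))) (by positivity)
    obtain ⟨n, rfl⟩ := hce hpc
    exact ⟨y, k, n, hyW, hk1, hpd⟩
  choose y k n hyW hk1 hdist using main
  have hinj : Function.Injective (fun τ => (k τ, n τ)) := by
    intro τ τ' hkn
    by_contra hne
    simp only [Prod.mk.injEq] at hkn
    -- wlog τ.1 < τ'.1
    have key : ∀ σ σ' : {τ : Idx.{a} // u < τ}, σ.1 < σ'.1 → k σ = k σ' → n σ = n σ' → False := by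
      intro σ σ' hlt hkk hnn
      have hy'W : y σ' ∈ W (succI σ.1) :=
        Wanti W hdec (succI_le hlt) (hyW σ')
      have h1 : infDist (y σ) (W (succI σ.1)) ≤ dist (y σ) (y σ') :=
        infDist_le_dist_of_mem hy'W
      have h2 : dist (y σ) (y σ') ≤ dist (y σ) (e (n σ)) + dist (e (n σ)) (y σ') :=
        dist_triangle _ _ _
      have h3 := hdist σ
      have h4 := hdist σ'
      rw [← hnn, ← hkk, dist_comm] at h4
      have h5 := hk1 σ
      have : (1 : ℝ) / (2 * (k σ + 1)) + 1 / (2 * (k σ + 1)) = 1 / (k σ + 1) := by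
        have ha : ((k σ : ℝ) + 1) ≠ 0 := by positivity
        field_simp
        ring_nf
      nlinarith [h1, h2, h3, h4, h5]
    rcases lt_trichotomy τ.1 τ'.1 with h | h | h
    · exact key τ τ' h hkn.1 hkn.2
    · exact hne (Subtype.ext h)
    · exact key τ' τ h hkn.1.symm hkn.2.symm
  exact not_countable_gt u (hinj.countable)

/-- If one can never escape `closure (E + W τ)`, then `W u` is contained in the separable
set, contradicting `lemD`. -/
lemma lemNS (hcl : ∀ σ, IsClosed (W σ : Set X))
    (hdec : ∀ α β : Idx.{a}, α < β → W β < W α)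
    {r : ℝ} (hr : ∀ z : X, (∀ σ, z ∈ closedBall (0 : X) 1 + (W σ : Set X)) → ‖z‖ ≤ r)
    (u : Idx.{a}) (E : Submodule ℝ X) (hE : IsSeparable (E : Set X)) :
    ∃ τ y, u < τ ∧ y ∈ W u ∧ y ∉ ((E ⊔ W τ).topologicalClosure : Set X) := by
  classical
  by_contra hcon
  push_neg at hcon
  have hr0 : 0 ≤ r := by
    have := hr 0 (fun σ => ⟨0, by simp, 0, (W σ).zero_mem, by simp⟩)
    simpa using this
  obtain ⟨c0, hc0, hEc0⟩ := hE
  set c : Set X := insert (0 : X) c0 with hcdef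
  have hc : c.Countable := hc0.insert 0
  have hEc : (E : Set X) ⊆ closure c := hEc0.trans (closure_mono (Set.subset_insert _ _))
  have h0c : (0 : X) ∈ c := Set.mem_insert _ _
  set e : ℕ → X := Set.enumerateCountable hc 0 with he
  have hrange : Set.range e = c := Set.range_enumerateCountable_of_mem hc h0c
  -- every element of W u is in the closure of c
  have hWu : (W u : Set X) ⊆ closure c := by
    intro y hy
    have key : ∀ ε : ℝ, 0 < ε → ∃ m : ℕ, dist y (e m) < ε := by
      intro ε hε
      set δ : ℝ := ε / (2 * r + 2) with hδdef
      have hδ : 0 < δ := by positivity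
      -- for every τ there is an n with infDist (y - e n) (W τ) < 2δ
      have cover : ∀ τ : Idx.{a}, ∃ m : ℕ, infDist (y - e m) (W τ) < 2 * δ := by
        intro τ
        obtain ⟨b, hb⟩ := exists_ub (fun i : Fin 2 => if i = 0 then τ else succI u)
        have hbu : u < b := lt_of_lt_of_le (lt_succI u) (by simpa using hb 1)
        have hbτ : τ ≤ b := by simpa using hb 0
        have hyc : y ∈ ((E ⊔ W b).topologicalClosure : Set X) := hcon b y hbu hy
        rw [Submodule.topologicalClosure_coe] at hyc
        have hmono : ((E ⊔ W b : Submodule ℝ X) : Set X) ⊆ ((E ⊔ W τ : Submodule ℝ X) : Set X) :=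
          sup_le_sup_left (Wanti W hdec hbτ) E
        have hyc2 : y ∈ closure ((E ⊔ W τ : Submodule ℝ X) : Set X) :=
          closure_mono hmono hyc
        obtain ⟨p, hp, hpd⟩ := Metric.mem_closure_iff.1 hyc2 δ hδ
        obtain ⟨v, hv, z, hz, rfl⟩ := Submodule.mem_sup.1 hp
        obtain ⟨q, hq, hqd⟩ := Metric.mem_closure_iff.1 (hEc hv) δ hδ
        obtain ⟨m, rfl⟩ := hrange.symm ▸ hq
        refine ⟨m, lt_of_le_of_lt (infDist_le_dist_of_mem hz) ?_⟩
        have : y - e m - z = (y - (v + z)) + (v - e m) := by abel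
        rw [dist_eq_norm, this]
        calc ‖y - (v + z) + (v - e m)‖ ≤ ‖y - (v + z)‖ + ‖v - e m‖ := norm_add_le _ _
          _ < δ + δ := by
              rw [dist_eq_norm] at hpd hqd
              exact add_lt_add hpd hqd
          _ = 2 * δ := by ring
      -- one n works for all τ
      obtain ⟨m, hm⟩ : ∃ m : ℕ, ∀ τ, infDist (y - e m) (W τ) < 2 * δ := by
        by_contra hno
        push_neg at hno
        choose τf hτf using hno
        obtain ⟨b, hb⟩ := exists_ub τf
        obtain ⟨m, hm⟩ := cover b
        refine absurd ?_ (not_lt.2 (hτf m))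
        calc infDist (y - e m) (W (τf m)) ≤ infDist (y - e m) (W b) :=
              infDist_le_infDist_of_subset (Wanti W hdec (hb m)) ⟨0, (W b).zero_mem⟩
          _ < 2 * δ := hm
      have hnorm : ‖y - e m‖ ≤ r * (2 * δ) := lemK W hr _ _ (by positivity) hm
      refine ⟨m, ?_⟩
      rw [dist_eq_norm]
      have h2r : (0 : ℝ) < 2 * r + 2 := by positivity
      calc ‖y - e m‖ ≤ r * (2 * δ) := hnorm
        _ < ε := by
            rw [hδdef, div_eq_mul_inv]
            have hlt : r * 2 < 2 * r + 2 := by linarith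
            calc r * (2 * (ε * (2 * r + 2)⁻¹)) = r * 2 * ε * (2 * r + 2)⁻¹ := by ring
              _ < (2 * r + 2) * ε * (2 * r + 2)⁻¹ :=
                  mul_lt_mul_of_pos_right (mul_lt_mul_of_pos_right hlt hε) (inv_pos.2 h2r)
              _ = ε := by rw [mul_right_comm, mul_inv_cancel₀ h2r.ne', one_mul]
    rw [Metric.mem_closure_iff]
    intro ε hε
    obtain ⟨m, hm⟩ := key ε hε
    exact ⟨e m, hrange ▸ Set.mem_range_self m, hm⟩
  -- now W u is inside a separable set; contradiction with lemD
  exact lemD W hcl hdec c hc u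
    (fun τ hτ => (SetLike.coe_subset_coe.2 (Wanti W hdec hτ.le)).trans hWu)

/-- Main construction: from a strictly decreasing `ω₁`-chain of closed subspaces whose
`1`-neighborhood intersection is norm-bounded, construct an uncountable biorthogonal system. -/
theorem mainAux (hcl : ∀ σ, IsClosed (W σ : Set X))
    (hdec : ∀ α β : Idx.{a}, α < β → W β < W α)
    {r : ℝ} (hr : ∀ z : X, (∀ σ, z ∈ closedBall (0 : X) 1 + (W σ : Set X)) → ‖z‖ ≤ r) :
    ∃ (y : Idx.{a} → X) (f : Idx.{a} → X →L[ℝ] ℝ),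
      (∀ α, f α (y α) = 1) ∧ ∀ α β, α ≠ β → f α (y β) = 0 := by
  classical
  have step : ∀ (u : Idx.{a}) (E : Submodule ℝ X), IsSeparable (E : Set X) →
      ∃ p : Idx.{a} × X × (X →L[ℝ] ℝ), u < p.1 ∧ p.2.1 ∈ W u ∧ p.2.2 p.2.1 = 1 ∧
        ∀ z ∈ ((E ⊔ W p.1).topologicalClosure : Submodule ℝ X), p.2.2 z = 0 := by
    intro u E hE
    obtain ⟨τ, yy, hτ, hyW, hyn⟩ := lemNS W hcl hdec hr u E hE
    obtain ⟨f, hf1, hf0⟩ := hb_vanish ((E ⊔ W τ).topologicalClosure)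
      (Submodule.isClosed_topologicalClosure _) hyn
    exact ⟨⟨τ, yy, f⟩, hτ, hyW, hf1, hf0⟩
  let F : Idx.{a} → Idx.{a} × X × (X →L[ℝ] ℝ) :=
    WellFounded.fix wellFounded_lt (fun α IH =>
      (step ((exists_ub fun β : {β : Idx.{a} // β < α} => (IH β.1 β.2).1).choose)
        (Submodule.span ℝ (Set.range fun β : {β : Idx.{a} // β < α} => (IH β.1 β.2).2.1))
        ((Set.countable_range _).isSeparable.span)).choose)
  have hFeq : ∀ α, F α = (fun α (IH : ∀ β, β < α → Idx.{a} × X × (X →L[ℝ] ℝ)) =>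
      (step ((exists_ub fun β : {β : Idx.{a} // β < α} => (IH β.1 β.2).1).choose)
        (Submodule.span ℝ (Set.range fun β : {β : Idx.{a} // β < α} => (IH β.1 β.2).2.1))
        ((Set.countable_range _).isSeparable.span)).choose) α (fun β _ => F β) :=
    fun α => WellFounded.fix_eq _ _ _
  have hspec : ∀ α : Idx.{a},
      (exists_ub fun β : {β : Idx.{a} // β < α} => (F β.1).1).choose < (F α).1 ∧
      (F α).2.1 ∈ W ((exists_ub fun β : {β : Idx.{a} // β < α} => (F β.1).1).choose) ∧
      (F α).2.2 (F α).2.1 = 1 ∧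
      ∀ z ∈ ((Submodule.span ℝ (Set.range fun β : {β : Idx.{a} // β < α} => (F β.1).2.1)
          ⊔ W (F α).1).topologicalClosure : Submodule ℝ X), (F α).2.2 z = 0 := by
    intro α
    conv_lhs => skip
    rw [hFeq α]
    exact (step _ _ ((Set.countable_range _).isSeparable.span)).choose_spec
  have hu : ∀ (α : Idx.{a}) (β : {β : Idx.{a} // β < α}),
      (F β.1).1 ≤ (exists_ub fun β : {β : Idx.{a} // β < α} => (F β.1).1).choose :=
    fun α β => (exists_ub fun β : {β : Idx.{a} // β < α} => (F β.1).1).choose_spec β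
  refine ⟨fun α => (F α).2.1, fun α => (F α).2.2, fun α => (hspec α).2.2.1, ?_⟩
  intro α β hne
  rcases lt_trichotomy α β with h | h | h
  · -- α < β : y β lies deep in the chain, killed by f α
    apply (hspec α).2.2.2
    apply Submodule.le_topologicalClosure
    apply (le_sup_right :
      W (F α).1 ≤ Submodule.span ℝ (Set.range fun γ : {γ : Idx.{a} // γ < α} => (F γ.1).2.1)
        ⊔ W (F α).1)
    have h1 : (F α).1 ≤ (exists_ub fun γ : {γ : Idx.{a} // γ < β} => (F γ.1).1).choose :=
      hu β ⟨α, h⟩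
    exact Wanti W hdec h1 (hspec β).2.1
  · exact absurd h hne
  · -- β < α : y β is in the span of the previously chosen points
    apply (hspec α).2.2.2
    apply Submodule.le_topologicalClosure
    apply (le_sup_left :
      Submodule.span ℝ (Set.range fun γ : {γ : Idx.{a} // γ < α} => (F γ.1).2.1) ≤
        Submodule.span ℝ (Set.range fun γ : {γ : Idx.{a} // γ < α} => (F γ.1).2.1)
          ⊔ W (F α).1)
    exact Submodule.subset_span ⟨⟨β, h⟩, rfl⟩

end Analysis

universe u1 u2 u3 u4

open Metric Bornology TopologicalSpace in
theorem outer (X : Type u1) [NormedAddCommGroup X] [NormedSpace ℝ X] [CompleteSpace X]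
    (hB : ClassB X)
    (hbio : ¬ ∃ (x : Idx.{u2} → X) (f : Idx.{u2} → (X →L[ℝ] ℝ)),
        (∀ α, f α (x α) = 1) ∧ ∀ α β, α ≠ β → f α (x β) = 0)
    (x : Idx.{u3} → X) (hx : ∀ σ, x σ ≠ 0)
    (Γ : Idx.{u4} → Set Idx.{u3})
    (hcof : ∀ σ b, ∃ γ ∈ Γ σ, b < γ)
    (hnest : ∀ α β : Idx.{u4}, α < β → Γ β ⊆ Γ α) :
    ⋂ σ, (closure (Submodule.span ℝ (x '' Γ σ) : Set X)) ≠ {0} := by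
  classical
  intro h0
  let e34 : Idx.{u3} ≃o Idx.{u4} := idxIso
  let Z : Idx.{u3} → Submodule ℝ X := fun σ =>
    (Submodule.span ℝ (x '' Γ (e34 σ))).topologicalClosure
  have hZcoe : ∀ σ, (Z σ : Set X) = closure (Submodule.span ℝ (x '' Γ (e34 σ)) : Set X) :=
    fun σ => Submodule.topologicalClosure_coe _
  have h0' : ⋂ σ : Idx.{u3}, (Z σ : Set X) = {0} := by
    have hsurj : Function.Surjective e34 := e34.surjective
    calc ⋂ σ : Idx.{u3}, (Z σ : Set X)
        = ⋂ σ : Idx.{u3}, closure (Submodule.span ℝ (x '' Γ (e34 σ)) : Set X) := by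
          simp only [hZcoe]
      _ = ⋂ τ : Idx.{u4}, closure (Submodule.span ℝ (x '' Γ τ) : Set X) :=
          hsurj.iInter_comp (fun τ => closure (Submodule.span ℝ (x '' Γ τ) : Set X))
      _ = {0} := h0
  have hZanti : ∀ {α β : Idx.{u3}}, α ≤ β → Z β ≤ Z α := by
    intro α β h
    rcases h.lt_or_eq with h | h
    · apply Submodule.topologicalClosure_mono
      apply Submodule.span_mono
      exact Set.image_mono (hnest _ _ (e34.strictMono h))
    · rw [h]
  have hmemZ : ∀ σ γ, γ ∈ Γ (e34 σ) → x γ ∈ Z σ := fun σ γ hγ =>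
    Submodule.le_topologicalClosure _ (Submodule.subset_span ⟨γ, hγ, rfl⟩)
  have hns : ∀ u : Idx.{u3}, ∃ τ, u < τ ∧ Z τ < Z u := by
    by_contra hstab
    push_neg at hstab
    obtain ⟨u, hu⟩ := hstab
    obtain ⟨γ, hγ, _⟩ := hcof (e34 u) u
    have hxγ : x γ ∈ ⋂ σ : Idx.{u3}, (Z σ : Set X) := by
      apply Set.mem_iInter.2
      intro σ
      rcases le_or_gt σ u with h | h
      · exact hZanti h (hmemZ u γ hγ)
      · have heq : Z σ = Z u := by
          rcases (hZanti h.le).lt_or_eq with hlt | heq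
          · exact absurd hlt (hu σ h)
          · exact heq
        have : x γ ∈ Z u := hmemZ u γ hγ
        rw [heq]
        exact this
    rw [h0'] at hxγ
    exact hx γ hxγ
  -- strictly decreasing reindexing
  let g : Idx.{u3} → Idx.{u3} := WellFounded.fix wellFounded_lt (fun α IH =>
    (hns ((exists_ub fun β : {β : Idx.{u3} // β < α} => IH β.1 β.2).choose)).choose)
  have hgeq : ∀ α, g α = (hns ((exists_ub fun β : {β : Idx.{u3} // β < α} =>
      g β.1).choose)).choose := fun α => WellFounded.fix_eq _ _ _
  have hg1 : ∀ α, (exists_ub fun β : {β : Idx.{u3} // β < α} => g β.1).choose < g α ∧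
      Z (g α) < Z ((exists_ub fun β : {β : Idx.{u3} // β < α} => g β.1).choose) := by
    intro α
    rw [hgeq α]
    exact (hns _).choose_spec
  have hgmono : StrictMono g := by
    intro β α h
    have h1 := (exists_ub fun γ : {γ : Idx.{u3} // γ < α} => g γ.1).choose_spec ⟨β, h⟩
    exact lt_of_le_of_lt h1 (hg1 α).1
  have hgdec : ∀ α β : Idx.{u3}, α < β → Z (g β) < Z (g α) := by
    intro α β h
    have h1 := (exists_ub fun γ : {γ : Idx.{u3} // γ < β} => g γ.1).choose_spec ⟨α, h⟩
    exact lt_of_lt_of_le (hg1 β).2 (hZanti h1)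
  let W3 : Idx.{u3} → Submodule ℝ X := fun σ => Z (g σ)
  have hW3cl : ∀ σ, IsClosed ((W3 σ : Set X)) := fun σ =>
    Submodule.isClosed_topologicalClosure _
  have hW3int : ⋂ σ : Idx.{u3}, (W3 σ : Set X) = {0} := by
    apply Set.Subset.antisymm
    · intro z hz
      rw [← h0']
      apply Set.mem_iInter.2
      intro σ
      exact hZanti hgmono.le_apply (Set.mem_iInter.1 hz σ)
    · intro z hz
      rw [Set.mem_singleton_iff] at hz
      subst hz
      exact Set.mem_iInter.2 fun σ => (W3 σ).zero_mem
  -- apply class (B) in its own universe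
  let e13 : Idx.{u1} ≃o Idx.{u3} := idxIso
  have hint1 : ⋂ σ : Idx.{u1}, ((W3 (e13 σ) : Set X)) = {0} :=
    (e13.surjective.iInter_comp (fun σ => (W3 σ : Set X))).trans hW3int
  have hbdd1 := hB (Cardinal.aleph 1) Cardinal.aleph0_lt_aleph_one
    Cardinal.isRegular_aleph_one (fun σ => W3 (e13 σ)) (fun σ => hW3cl _)
    (fun α β h => hgdec _ _ (e13.strictMono h)) hint1
  have hbdd3 : IsBounded (⋂ σ : Idx.{u3}, (closedBall (0 : X) 1 + (W3 σ : Set X))) := by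
    have : (⋂ σ : Idx.{u1}, (closedBall (0 : X) 1 + (W3 (e13 σ) : Set X)))
        = ⋂ σ : Idx.{u3}, (closedBall (0 : X) 1 + (W3 σ : Set X)) :=
      e13.surjective.iInter_comp (fun σ => closedBall (0 : X) 1 + (W3 σ : Set X))
    rw [← this]
    exact hbdd1
  obtain ⟨r, hrsub⟩ := hbdd3.subset_closedBall 0
  have hr : ∀ z : X, (∀ σ : Idx.{u3}, z ∈ closedBall (0 : X) 1 + (W3 σ : Set X)) → ‖z‖ ≤ r := by
    intro z hz
    have := hrsub (Set.mem_iInter.2 hz)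
    rwa [mem_closedBall, dist_zero_right] at this
  obtain ⟨y, f, hf1, hf0⟩ := mainAux W3 hW3cl (fun α β h => hgdec α β h) hr
  -- transfer the biorthogonal system
  let e23 : Idx.{u2} ≃o Idx.{u3} := idxIso
  exact hbio ⟨fun α => y (e23 α), fun α => f (e23 α), fun α => hf1 _,
    fun α β hne => hf0 _ _ (fun hEq => hne (e23.injective hEq))⟩

end IcsAux

/-- If `X` is in class (B) and admits no uncountable biorthogonal system, then for any
family `{x_α}_{α<ω₁}` of nonzero vectors and any nested family `{Γ_σ}_{σ<ω₁}` of cofinal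
subsets of `ω₁`, the intersection `⋂_σ closure (span {x_α : α ∈ Γ_σ})` is nontrivial. -/
theorem iInter_closure_span_ne_trivial (X : Type*) [NormedAddCommGroup X]
    [NormedSpace ℝ X] [CompleteSpace X] (hB : ClassB X)
    (hbio : ¬ ∃ (x : {σ : Ordinal // σ < (Cardinal.aleph 1).ord} → X)
        (f : {σ : Ordinal // σ < (Cardinal.aleph 1).ord} → (X →L[ℝ] ℝ)),
        (∀ α, f α (x α) = 1) ∧ ∀ α β, α ≠ β → f α (x β) = 0)
    (x : {σ : Ordinal // σ < (Cardinal.aleph 1).ord} → X)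
    (hx : ∀ σ, x σ ≠ 0)
    (Γ : {σ : Ordinal // σ < (Cardinal.aleph 1).ord} →
      Set {σ : Ordinal // σ < (Cardinal.aleph 1).ord})
    (hcof : ∀ σ b, ∃ γ ∈ Γ σ, b < γ)
    (hnest : ∀ α β, α < β → Γ β ⊆ Γ α) :
    ⋂ σ, (closure (Submodule.span ℝ (x '' Γ σ) : Set X)) ≠ {0} := by
  exact IcsAux.outer X hB hbio x hx Γ hcof hnest
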